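/- arXiv:2312.16644 — 3 statements merged into one kernel-verified Lean document; each statement's English description precedes it below -/
import Mathlib

section
/- With $\tau$ and $\dim_\infty(\mathfrak{J})$ as defined from a set function $\mathfrak{J}$ on dyadic cubes, and $\mathfrak{q} = \inf\{q \ge 0 : \tau(q) < 0\}$: one has $\dim_\infty(\mathfrak{J}) > 0$ if and only if $\mathfrak{q} < \infty$. -/
open Filter

noncomputable section

/-- The `𝔍`-partition function (convention `0^0 = 0`). -/
def tauFn {ι : Type*} (S : ℕ → Finset ι) (J : ι → ℝ) (q : ℝ) : EReal :=
  limsup (fun n : ℕ =>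
    ((Real.log (∑ Q ∈ (S n).filter (fun Q => 0 < J Q), J Q ^ q) / (n * Real.log 2) : ℝ) : EReal))
    atTop

/-- The `∞`-dimension of `𝔍`. -/
def dimInf {ι : Type*} (S : ℕ → Finset ι) (hS : ∀ n, (S n).Nonempty) (J : ι → ℝ) : EReal :=
  liminf (fun n : ℕ =>
    ((Real.log ((S n).sup' (hS n) J) / (-(n * Real.log 2)) : ℝ) : EReal)) atTop

/-- `dim_∞(𝔍) > 0` if and only if `𝔮 = inf {q ≥ 0 : τ(q) < 0} < ∞`
(the infimum being taken in the extended reals, so that it is `⊤` iff the set is empty). -/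
theorem stmt3 {ι : Type*} (d : ℕ) (S : ℕ → Finset ι) (hS : ∀ n, (S n).Nonempty) (J : ι → ℝ)
    (hJ : ∀ i, 0 ≤ J i)
    (hcard : ∀ n, (S n).card ≤ 2 ^ (n * d))
    (hpos : ∀ n, ∃ Q ∈ S n, 0 < J Q) :
    0 < dimInf S hS J ↔
      sInf ((fun q : ℝ => (q : EReal)) '' {q : ℝ | 0 ≤ q ∧ tauFn S J q < 0}) < ⊤ := by
  have hL2 : (0:ℝ) < Real.log 2 := Real.log_pos one_lt_two
  -- positivity of partition sums
  have hsum_pos : ∀ (q : ℝ) (n : ℕ),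
      0 < ∑ Q ∈ (S n).filter (fun Q => 0 < J Q), J Q ^ q := by
    intro q n
    obtain ⟨Q1, hQ1, hQ1pos⟩ := hpos n
    refine Finset.sum_pos (fun Q hQ => ?_) ⟨Q1, Finset.mem_filter.2 ⟨hQ1, hQ1pos⟩⟩
    exact Real.rpow_pos_of_pos (Finset.mem_filter.1 hQ).2 q
  have hsup_pos : ∀ n : ℕ, 0 < (S n).sup' (hS n) J := by
    intro n
    obtain ⟨Q1, hQ1, hQ1pos⟩ := hpos n
    exact lt_of_lt_of_le hQ1pos (Finset.le_sup' J hQ1)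
  -- reformulate the RHS
  have hRHS : (sInf ((fun q : ℝ => (q : EReal)) '' {q : ℝ | 0 ≤ q ∧ tauFn S J q < 0}) < ⊤)
      ↔ ∃ q : ℝ, 0 ≤ q ∧ tauFn S J q < 0 := by
    constructor
    · intro h
      by_contra hc
      push_neg at hc
      have hempty : {q : ℝ | 0 ≤ q ∧ tauFn S J q < 0} = ∅ := by
        ext q
        simp only [Set.mem_setOf_eq, Set.mem_empty_iff_false, iff_false, not_and, not_lt]
        exact hc q
      rw [hempty] at h
      simp at h
    · rintro ⟨q, hq0, hq⟩
      exact lt_of_le_of_lt (sInf_le ⟨q, ⟨hq0, hq⟩, rfl⟩) (EReal.coe_lt_top q)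
  rw [hRHS]
  constructor
  · -- dimInf > 0 → ∃ q
    intro hdim
    obtain ⟨ε, hε0, hεdim⟩ := EReal.exists_between_coe_real hdim
    have hε0' : (0:ℝ) < ε := by exact_mod_cast hε0
    refine ⟨((d:ℝ)+1)/ε, by positivity, ?_⟩
    set q : ℝ := ((d:ℝ)+1)/ε with hqdef
    have hev := eventually_lt_of_lt_liminf hεdim
    have key : ∀ᶠ n : ℕ in atTop,
        ((Real.log (∑ Q ∈ (S n).filter (fun Q => 0 < J Q), J Q ^ q)
          / (n * Real.log 2) : ℝ) : EReal) ≤ ((-1 : ℝ) : EReal) := by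
      filter_upwards [hev, eventually_ge_atTop 1] with n hn hn1
      set D : ℝ := (n:ℝ) * Real.log 2 with hDdef
      have hn0 : (0:ℝ) < (n:ℝ) := by exact_mod_cast hn1
      have hD : 0 < D := by positivity
      have hnD : -D < 0 := by linarith
      set M : ℝ := (S n).sup' (hS n) J with hMdef
      have hM0 : 0 < M := hsup_pos n
      have hn' : ε < Real.log M / (-D) := by exact_mod_cast hn
      have hlogM : Real.log M < ε * (-D) := (lt_div_iff_of_neg hnD).mp hn'
      -- each term is bounded
      have hMq : M ^ q < Real.exp (-(((d:ℝ)+1) * (n:ℝ) * Real.log 2)) := by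
        rw [← Real.log_lt_iff_lt_exp (Real.rpow_pos_of_pos hM0 q), Real.log_rpow hM0]
        have hq0' : 0 < q := by positivity
        have hqε : q * ε = (d:ℝ) + 1 := div_mul_cancel₀ _ (ne_of_gt hε0')
        calc q * Real.log M < q * (ε * (-D)) := by
              exact mul_lt_mul_of_pos_left hlogM hq0'
          _ = -(((d:ℝ)+1) * (n:ℝ) * Real.log 2) := by
              rw [hDdef]; nlinarith [hqε]
      have hterm : ∀ Q ∈ (S n).filter (fun Q => 0 < J Q),
          J Q ^ q ≤ Real.exp (-(((d:ℝ)+1) * (n:ℝ) * Real.log 2)) := by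
        intro Q hQ
        have hQle : J Q ≤ M := Finset.le_sup' J (Finset.mem_filter.1 hQ).1
        have : J Q ^ q ≤ M ^ q :=
          Real.rpow_le_rpow (hJ Q) hQle (by positivity)
        linarith
      have hsum_le : ∑ Q ∈ (S n).filter (fun Q => 0 < J Q), J Q ^ q
          ≤ ((S n).card : ℝ) * Real.exp (-(((d:ℝ)+1) * (n:ℝ) * Real.log 2)) := by
        calc ∑ Q ∈ (S n).filter (fun Q => 0 < J Q), J Q ^ q
            ≤ ((S n).filter (fun Q => 0 < J Q)).card
              • Real.exp (-(((d:ℝ)+1) * (n:ℝ) * Real.log 2)) :=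
              Finset.sum_le_card_nsmul _ _ _ hterm
          _ = (((S n).filter (fun Q => 0 < J Q)).card : ℝ)
              * Real.exp (-(((d:ℝ)+1) * (n:ℝ) * Real.log 2)) := by
              rw [nsmul_eq_mul]
          _ ≤ ((S n).card : ℝ) * Real.exp (-(((d:ℝ)+1) * (n:ℝ) * Real.log 2)) :=
              mul_le_mul_of_nonneg_right
                (by exact_mod_cast Finset.card_filter_le _ _) (Real.exp_nonneg _)
      have hcard' : ((S n).card : ℝ) ≤ (2:ℝ) ^ (n * d) := by
        exact_mod_cast hcard n
      have hsum_le2 : ∑ Q ∈ (S n).filter (fun Q => 0 < J Q), J Q ^ q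
          ≤ (2:ℝ) ^ (n * d) * Real.exp (-(((d:ℝ)+1) * (n:ℝ) * Real.log 2)) := by
        refine le_trans hsum_le ?_
        exact mul_le_mul_of_nonneg_right hcard' (Real.exp_nonneg _)
      have hlogsum : Real.log (∑ Q ∈ (S n).filter (fun Q => 0 < J Q), J Q ^ q) ≤ -D := by
        have h1 := Real.log_le_log (hsum_pos q n) hsum_le2
        rw [Real.log_mul (by positivity) (Real.exp_ne_zero _), Real.log_pow,
          Real.log_exp] at h1
        have h2 : ((n * d : ℕ) : ℝ) * Real.log 2 + -(((d:ℝ)+1) * (n:ℝ) * Real.log 2)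
            = -D := by
          rw [hDdef]; push_cast; ring
        linarith
      have : Real.log (∑ Q ∈ (S n).filter (fun Q => 0 < J Q), J Q ^ q) / D ≤ -1 := by
        rw [div_le_iff₀ hD]; linarith
      exact_mod_cast this
    have hle := limsup_le_of_le (by isBoundedDefault) key
    refine lt_of_le_of_lt hle ?_
    exact_mod_cast (by norm_num : (-1:ℝ) < 0)
  · -- ∃ q → dimInf > 0
    rintro ⟨q, hq0, hq⟩
    -- q ≠ 0
    have hqne : q ≠ 0 := by
      intro h0
      subst h0
      have hall : ∀ n : ℕ, (0 : EReal) ≤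
          ((Real.log (∑ Q ∈ (S n).filter (fun Q => 0 < J Q), J Q ^ (0:ℝ))
            / (n * Real.log 2) : ℝ) : EReal) := by
        intro n
        have hsum1 : (1:ℝ) ≤ ∑ Q ∈ (S n).filter (fun Q => 0 < J Q), J Q ^ (0:ℝ) := by
          obtain ⟨Q1, hQ1, hQ1pos⟩ := hpos n
          have hne : ((S n).filter (fun Q => 0 < J Q)).Nonempty :=
            ⟨Q1, Finset.mem_filter.2 ⟨hQ1, hQ1pos⟩⟩
          have : ∑ Q ∈ (S n).filter (fun Q => 0 < J Q), J Q ^ (0:ℝ)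
              = (((S n).filter (fun Q => 0 < J Q)).card : ℝ) := by
            rw [Finset.sum_congr rfl (fun Q _ => Real.rpow_zero (J Q))]
            simp
          rw [this]
          exact_mod_cast Finset.card_pos.2 hne
        have : (0:ℝ) ≤ Real.log (∑ Q ∈ (S n).filter (fun Q => 0 < J Q), J Q ^ (0:ℝ))
            / (n * Real.log 2) :=
          div_nonneg (Real.log_nonneg hsum1) (by positivity)
        exact_mod_cast this
      have : (0:EReal) ≤ tauFn S J 0 :=
        le_limsup_of_frequently_le (Frequently.of_forall hall) (by isBoundedDefault)
      exact absurd hq (not_lt.2 this)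
    have hqpos : 0 < q := lt_of_le_of_ne hq0 (Ne.symm hqne)
    obtain ⟨c, hc1, hc2⟩ := EReal.exists_between_coe_real hq
    have hc2' : c < 0 := by exact_mod_cast hc2
    have hev := eventually_lt_of_limsup_lt hc1
    have key : ∀ᶠ n : ℕ in atTop, (((-c/q : ℝ)) : EReal) ≤
        ((Real.log ((S n).sup' (hS n) J) / (-(n * Real.log 2)) : ℝ) : EReal) := by
      filter_upwards [hev, eventually_ge_atTop 1] with n hn hn1
      set D : ℝ := (n:ℝ) * Real.log 2 with hDdef
      have hn0 : (0:ℝ) < (n:ℝ) := by exact_mod_cast hn1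
      have hD : 0 < D := by positivity
      have hnD : -D < 0 := by linarith
      have hn' : Real.log (∑ Q ∈ (S n).filter (fun Q => 0 < J Q), J Q ^ q) / D < c := by
        exact_mod_cast hn
      have hlogsum : Real.log (∑ Q ∈ (S n).filter (fun Q => 0 < J Q), J Q ^ q) < c * D :=
        (div_lt_iff₀ hD).mp hn'
      obtain ⟨Q0, hQ0, hQ0eq⟩ := Finset.exists_mem_eq_sup' (hS n) J
      have hM0 : 0 < J Q0 := hQ0eq ▸ hsup_pos n
      have hQ0f : Q0 ∈ (S n).filter (fun Q => 0 < J Q) := Finset.mem_filter.2 ⟨hQ0, hM0⟩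
      have hsingle : J Q0 ^ q ≤ ∑ Q ∈ (S n).filter (fun Q => 0 < J Q), J Q ^ q :=
        Finset.single_le_sum (fun Q _ => Real.rpow_nonneg (hJ Q) q) hQ0f
      have h1 : Real.log (J Q0 ^ q) ≤ Real.log (∑ Q ∈ (S n).filter (fun Q => 0 < J Q), J Q ^ q) :=
        Real.log_le_log (Real.rpow_pos_of_pos hM0 q) hsingle
      rw [Real.log_rpow hM0] at h1
      have h2 : q * Real.log (J Q0) < c * D := lt_of_le_of_lt h1 hlogsum
      have h3 : -c/q ≤ Real.log (J Q0) / (-D) := by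
        rw [le_div_iff_of_neg hnD]
        have h4 : Real.log (J Q0) < c * D / q := by
          rw [lt_div_iff₀ hqpos]; linarith [h2]
        have h5 : -c/q * -D = c * D / q := by field_simp
        linarith
      rw [hQ0eq]
      exact_mod_cast h3
    have hle : ((-c/q : ℝ) : EReal) ≤ dimInf S hS J :=
      le_liminf_of_le (by isBoundedDefault) key
    refine lt_of_lt_of_le ?_ hle
    have : (0:ℝ) < -c/q := div_pos (by linarith) hqpos
    exact_mod_cast this

end
end

section
/- Let $\mathfrak{J}$ be a set function on dyadic cubes with $\mathfrak{q} := \inf\{q \ge 0 : \tau(q) < 0\} < \infty$. Then the critical exponent $\kappa := \inf\{q \ge 0 : \sum_{Q \in \mathcal{S}} \mathfrak{J}(Q)^q < \infty\}$ equals $\mathfrak{q}$. -/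
open Filter

noncomputable section

/-- Eventual geometric bound gives summability. -/
private lemma aux_geom_summable {f : ℕ → ℝ} (hf : ∀ n, 0 ≤ f n) {c : ℝ} (hc : c < 0)
    (h : ∀ᶠ n in atTop, f n ≤ Real.exp (c * n)) : Summable f := by
  obtain ⟨N, hN⟩ := eventually_atTop.1 h
  rw [← summable_nat_add_iff N]
  have hgeom : Summable (fun n : ℕ => Real.exp (c * N) * Real.exp c ^ n) :=
    (summable_geometric_of_lt_one (Real.exp_nonneg c) (Real.exp_lt_one_iff.2 hc)).mul_left _
  refine Summable.of_nonneg_of_le (fun n => hf _) (fun n => ?_) hgeom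
  have h1 : f (n + N) ≤ Real.exp (c * (n + N : ℕ)) := hN _ (by omega)
  have h2 : Real.exp (c * (n + N : ℕ)) = Real.exp (c * N) * Real.exp c ^ n := by
    push_cast
    rw [← Real.exp_nat_mul, ← Real.exp_add]
    ring_nf
  linarith [h1, h2.le, h2.ge]

/-- The sum over a generation with positive `𝔍`-value is positive. -/
private lemma aux_Sn_pos {ι : Type*} (S : ℕ → Finset ι) (J : ι → ℝ)
    (hpos : ∀ n, ∃ Q ∈ S n, 0 < J Q) (q : ℝ) (n : ℕ) :
    0 < ∑ Q ∈ (S n).filter (fun Q => 0 < J Q), J Q ^ q := by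
  obtain ⟨Q0, hQ0, hJQ0⟩ := hpos n
  refine Finset.sum_pos (fun Q hQ => Real.rpow_pos_of_pos (Finset.mem_filter.1 hQ).2 q)
    ⟨Q0, Finset.mem_filter.2 ⟨hQ0, hJQ0⟩⟩

/-- Summability of the total family is equivalent to summability of generation sums. -/
private lemma aux_summable_iff {ι : Type*} (S : ℕ → Finset ι) (J : ι → ℝ)
    (hJ : ∀ i, 0 ≤ J i) (q : ℝ) :
    Summable (fun p : (n : ℕ) × {Q : ι // Q ∈ S n ∧ 0 < J Q} => J p.2.1 ^ q) ↔
      Summable (fun n : ℕ => ∑ Q ∈ (S n).filter (fun Q => 0 < J Q), J Q ^ q) := by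
  have hfin : ∀ n, Finite {Q : ι // Q ∈ S n ∧ 0 < J Q} := fun n =>
    Set.Finite.to_subtype (Set.Finite.subset (S n).finite_toSet (fun Q hQ => hQ.1))
  have hfiber : ∀ n : ℕ, (∑' Q : {Q : ι // Q ∈ S n ∧ 0 < J Q}, J Q.1 ^ q)
      = ∑ Q ∈ (S n).filter (fun Q => 0 < J Q), J Q ^ q := by
    intro n
    rw [← Finset.tsum_subtype ((S n).filter (fun Q => 0 < J Q)) (fun Q => J Q ^ q)]
    exact ((Equiv.subtypeEquivRight (fun Q => by
      simp [Finset.mem_filter])).tsum_eq (fun Q : {Q : ι // Q ∈ S n ∧ 0 < J Q} => J Q.1 ^ q)).symm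
  rw [summable_sigma_of_nonneg (fun p => Real.rpow_nonneg (hJ _) q)]
  constructor
  · rintro ⟨-, h⟩
    refine h.congr fun n => hfiber n
  · intro h
    haveI := hfin
    exact ⟨fun n => Summable.of_finite, h.congr fun n => (hfiber n).symm⟩

/-- If `dim_∞(𝔍) > 0` (so that `𝔮 = inf {q ≥ 0 : τ(q) < 0} < ∞`, i.e. the set is
nonempty), then the critical exponent `κ = inf {q ≥ 0 : ∑_{Q ∈ S} 𝔍(Q)^q < ∞}` (the sum running
over all cubes of all generations with positive `𝔍`-value) equals `𝔮`. -/
theorem stmt4 {ι : Type*} (d : ℕ) (S : ℕ → Finset ι) (hS : ∀ n, (S n).Nonempty) (J : ι → ℝ)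
    (hJ : ∀ i, 0 ≤ J i)
    (hcard : ∀ n, (S n).card ≤ 2 ^ (n * d))
    (hpos : ∀ n, ∃ Q ∈ S n, 0 < J Q)
    (hdim : 0 < dimInf S hS J)
    (hne : {q : ℝ | 0 ≤ q ∧ tauFn S J q < 0}.Nonempty) :
    sInf {q : ℝ | 0 ≤ q ∧
        Summable (fun p : (n : ℕ) × {Q : ι // Q ∈ S n ∧ 0 < J Q} => J p.2.1 ^ q)} =
      sInf {q : ℝ | 0 ≤ q ∧ tauFn S J q < 0} := by
  have hlog2 : (0:ℝ) < Real.log 2 := Real.log_pos one_lt_two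
  set Sn : ℝ → ℕ → ℝ := fun q n => ∑ Q ∈ (S n).filter (fun Q => 0 < J Q), J Q ^ q with hSn
  -- B ⊆ A
  have hBA : ∀ q : ℝ, tauFn S J q < 0 → Summable (fun n : ℕ => Sn q n) := by
    intro q hq
    obtain ⟨c, hc1, hc2⟩ := EReal.exists_between_coe_real hq
    have hc0 : c < 0 := by exact_mod_cast hc2
    have hev := eventually_lt_of_limsup_lt hc1
    refine aux_geom_summable (fun n => (aux_Sn_pos S J hpos q n).le)
      (mul_neg_of_neg_of_pos hc0 hlog2) ?_
    filter_upwards [hev, eventually_ge_atTop 1] with n hn hn1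
    have hn' : Real.log (Sn q n) / (n * Real.log 2) < c := by exact_mod_cast hn
    have hnpos : (0:ℝ) < n * Real.log 2 := by
      have : (0:ℝ) < (n:ℝ) := by exact_mod_cast hn1
      positivity
    have hlt : Real.log (Sn q n) < (c * Real.log 2) * n := by
      have := (div_lt_iff₀ hnpos).1 hn'
      nlinarith
    calc Sn q n = Real.exp (Real.log (Sn q n)) := (Real.exp_log (aux_Sn_pos S J hpos q n)).symm
      _ ≤ Real.exp (c * Real.log 2 * n) := Real.exp_le_exp.2 hlt.le
  -- dimension bound
  obtain ⟨δ, hδ0, hδev⟩ : ∃ δ : ℝ, 0 < δ ∧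
      ∀ᶠ n : ℕ in atTop, ∀ Q ∈ S n, J Q ≤ Real.exp (-(δ * Real.log 2) * n) := by
    obtain ⟨δ, hδ1, hδ2⟩ := EReal.exists_between_coe_real hdim
    have hδ0 : (0:ℝ) < δ := by exact_mod_cast hδ1
    refine ⟨δ, hδ0, ?_⟩
    have hev := eventually_lt_of_lt_liminf hδ2
    filter_upwards [hev, eventually_ge_atTop 1] with n hn hn1 Q hQ
    have hn' : δ < Real.log ((S n).sup' (hS n) J) / (-(n * Real.log 2)) := by exact_mod_cast hn
    have hnpos : (0:ℝ) < (n:ℝ) := by exact_mod_cast hn1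
    have hneg : -((n:ℝ) * Real.log 2) < 0 := by nlinarith
    have hlt : Real.log ((S n).sup' (hS n) J) < -(δ * Real.log 2) * n := by
      have := (lt_div_iff_of_neg hneg).1 hn'
      nlinarith
    obtain ⟨Q0, hQ0, hJQ0⟩ := hpos n
    have hsup0 : 0 < (S n).sup' (hS n) J := lt_of_lt_of_le hJQ0 (Finset.le_sup' J hQ0)
    calc J Q ≤ (S n).sup' (hS n) J := Finset.le_sup' J hQ
      _ = Real.exp (Real.log ((S n).sup' (hS n) J)) := (Real.exp_log hsup0).symm
      _ ≤ Real.exp (-(δ * Real.log 2) * n) := Real.exp_le_exp.2 hlt.le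
  -- A step: summable at q implies τ(q') < 0 for q' > q
  have hstep : ∀ q : ℝ, Summable (fun n : ℕ => Sn q n) → ∀ q' : ℝ, q < q' →
      tauFn S J q' < 0 := by
    intro q hsum q' hqq'
    set C : ℝ := ∑' n : ℕ, Sn q n with hC
    have hCle : ∀ n, Sn q n ≤ C :=
      fun n => Summable.le_tsum hsum n (fun j _ => (aux_Sn_pos S J hpos q j).le)
    have hC0 : 0 < C := lt_of_lt_of_le (aux_Sn_pos S J hpos q 0) (hCle 0)
    set ε : ℝ := δ * (q' - q) with hε
    have hε0 : 0 < ε := by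
      have : 0 < q' - q := by linarith
      positivity
    -- the sum at q' is eventually bounded
    have hbound : ∀ᶠ n : ℕ in atTop,
        Sn q' n ≤ C * Real.exp (-(δ * Real.log 2) * n * (q' - q)) := by
      filter_upwards [hδev] with n hn
      have hterm : ∀ Q ∈ (S n).filter (fun Q => 0 < J Q),
          J Q ^ q' ≤ J Q ^ q * Real.exp (-(δ * Real.log 2) * n * (q' - q)) := by
        intro Q hQ
        obtain ⟨hQS, hJQ⟩ := Finset.mem_filter.1 hQ
        have h1 : J Q ^ q' = J Q ^ q * J Q ^ (q' - q) := by
          rw [← Real.rpow_add hJQ]; ring_nf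
        rw [h1]
        refine mul_le_mul_of_nonneg_left ?_ (Real.rpow_nonneg (hJ Q) q)
        calc J Q ^ (q' - q) ≤ (Real.exp (-(δ * Real.log 2) * n)) ^ (q' - q) :=
              Real.rpow_le_rpow (hJ Q) (hn Q hQS) (by linarith)
          _ = Real.exp (-(δ * Real.log 2) * n * (q' - q)) := (Real.exp_mul _ _).symm
      calc Sn q' n ≤ ∑ Q ∈ (S n).filter (fun Q => 0 < J Q),
            J Q ^ q * Real.exp (-(δ * Real.log 2) * n * (q' - q)) :=
            Finset.sum_le_sum hterm
        _ = Sn q n * Real.exp (-(δ * Real.log 2) * n * (q' - q)) := by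
            rw [← Finset.sum_mul]
        _ ≤ C * Real.exp (-(δ * Real.log 2) * n * (q' - q)) := by
            exact mul_le_mul_of_nonneg_right (hCle n) (Real.exp_nonneg _)
    -- smallness of log C / (n log 2)
    have htend : Tendsto (fun n : ℕ => Real.log C / (n * Real.log 2)) atTop (nhds 0) := by
      have h1 : Tendsto (fun n : ℕ => (Real.log C / Real.log 2) * (n:ℝ)⁻¹) atTop (nhds 0) := by
        have := (tendsto_inv_atTop_nhds_zero_nat (𝕜 := ℝ)).const_mul (Real.log C / Real.log 2)
        simpa using this
      refine h1.congr fun n => ?_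
      field_simp
    have hsmall : ∀ᶠ n : ℕ in atTop, Real.log C / (n * Real.log 2) < ε / 2 :=
      htend.eventually_lt_const (by positivity)
    -- eventually the quantity in the limsup is ≤ -ε/2
    have hev2 : ∀ᶠ n : ℕ in atTop,
        ((Real.log (Sn q' n) / (n * Real.log 2) : ℝ) : EReal) ≤ ((-(ε / 2) : ℝ) : EReal) := by
      filter_upwards [hbound, hsmall, eventually_ge_atTop 1] with n hn hsm hn1
      have hnpos : (0:ℝ) < (n:ℝ) := by exact_mod_cast hn1
      have hdenpos : (0:ℝ) < (n:ℝ) * Real.log 2 := by positivity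
      have hlog : Real.log (Sn q' n) ≤ Real.log C + (-(δ * Real.log 2) * n * (q' - q)) := by
        calc Real.log (Sn q' n)
            ≤ Real.log (C * Real.exp (-(δ * Real.log 2) * n * (q' - q))) :=
              Real.log_le_log (aux_Sn_pos S J hpos q' n) hn
          _ = Real.log C + (-(δ * Real.log 2) * n * (q' - q)) := by
              rw [Real.log_mul (ne_of_gt hC0) (Real.exp_ne_zero _), Real.log_exp]
      have hdiv : Real.log (Sn q' n) / ((n:ℝ) * Real.log 2) ≤
          Real.log C / ((n:ℝ) * Real.log 2) - ε := by
        have h2 : (Real.log C + (-(δ * Real.log 2) * n * (q' - q))) / ((n:ℝ) * Real.log 2)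
            = Real.log C / ((n:ℝ) * Real.log 2) - ε := by
          rw [hε]
          field_simp
          ring
        calc Real.log (Sn q' n) / ((n:ℝ) * Real.log 2)
            ≤ (Real.log C + (-(δ * Real.log 2) * n * (q' - q))) / ((n:ℝ) * Real.log 2) := by
              gcongr
          _ = _ := h2
      have : Real.log (Sn q' n) / ((n:ℝ) * Real.log 2) ≤ -(ε / 2) := by linarith
      exact_mod_cast this
    have hlimsup : tauFn S J q' ≤ ((-(ε / 2) : ℝ) : EReal) :=
      limsup_le_of_le (by isBoundedDefault) hev2
    refine lt_of_le_of_lt hlimsup ?_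
    have : (-(ε / 2) : ℝ) < 0 := by linarith
    exact_mod_cast this
  -- assemble
  set A : Set ℝ := {q : ℝ | 0 ≤ q ∧
    Summable (fun p : (n : ℕ) × {Q : ι // Q ∈ S n ∧ 0 < J Q} => J p.2.1 ^ q)} with hA
  set B : Set ℝ := {q : ℝ | 0 ≤ q ∧ tauFn S J q < 0} with hB
  have hBsubA : B ⊆ A := by
    intro q hq
    exact ⟨hq.1, (aux_summable_iff S J hJ q).2 (hBA q hq.2)⟩
  have hAbdd : BddBelow A := ⟨0, fun x hx => hx.1⟩
  have hBbdd : BddBelow B := ⟨0, fun x hx => hx.1⟩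
  have hAne : A.Nonempty := hne.imp (fun q hq => hBsubA hq)
  apply le_antisymm
  · exact csInf_le_csInf hAbdd hne hBsubA
  · refine le_csInf hAne fun q hq => ?_
    refine le_of_forall_gt_imp_ge_of_dense fun c hc => ?_
    refine csInf_le hBbdd ?_
    exact ⟨le_trans hq.1 hc.le, hstep q ((aux_summable_iff S J hJ q).1 hq.2) c hc⟩

end
end

section
/- Let $\mathfrak{J}$ be a non-trivial, monotone, uniformly vanishing, locally non-vanishing set function on dyadic cubes $\mathcal{S}$ with critical exponent $\kappa = \inf\{q \ge 0 : \sum_{Q\in\mathcal{S}} \mathfrak{J}(Q)^q < \infty\} < \infty$. Then the upper partition entropy satisfies $\overline{h} := \limsup_{x\to\infty} \frac{\log \operatorname{card}(G_x)}{\log x} \le \kappa$. -/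
open Filter Set

noncomputable section

/-- Validity of a dyadic-cube index of generation `p.1`: the cube lies in the unit cube. -/
def validQ (d : ℕ) (p : ℕ × (Fin d → ℕ)) : Prop := ∀ i, p.2 i < 2 ^ p.1

/-- The dyadic parent of a cube index. -/
def parQ (d : ℕ) (p : ℕ × (Fin d → ℕ)) : ℕ × (Fin d → ℕ) := (p.1 - 1, fun i => p.2 i / 2)

/-- The minimal `x`-good partition `G_x`: cubes `Q` with `𝔍(Q) < 1/x` whose parent `Q'`
satisfies `𝔍(Q') ≥ 1/x`. -/
def goodPart (d : ℕ) (J : ℕ × (Fin d → ℕ) → ℝ) (x : ℝ) : Set (ℕ × (Fin d → ℕ)) :=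
  {p | validQ d p ∧ 0 < p.1 ∧ J p < 1 / x ∧ 1 / x ≤ J (parQ d p)}

lemma validQ_parQ {d : ℕ} {p : ℕ × (Fin d → ℕ)} (h : validQ d p) : validQ d (parQ d p) := by
  intro i
  have h1 := h i
  simp only [parQ]
  have h2 : p.2 i < 2 ^ (p.1 - 1) * 2 := by
    refine lt_of_lt_of_le h1 ?_
    rcases Nat.eq_zero_or_pos p.1 with h0 | h0
    · simp [h0]
    · rw [← pow_succ]
      exact Nat.pow_le_pow_right (by norm_num) (by omega)
  omega

/-- Key counting bound: `card (G_x) ≤ 2^d * C * x^q`. -/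
lemma card_goodPart_le (d : ℕ) (J : ℕ × (Fin d → ℕ) → ℝ)
    (huv : ∀ ε > (0 : ℝ), ∃ N : ℕ, ∀ p, validQ d p → N ≤ p.1 → J p < ε)
    (q : ℝ) (hq0 : 0 ≤ q)
    (hsum : Summable (fun p : {p : ℕ × (Fin d → ℕ) // validQ d p ∧ 0 < J p} => J p.1 ^ q))
    (x : ℝ) (hx : 1 < x) :
    ((goodPart d J x).ncard : ℝ) ≤
      2 ^ d * ((∑' p : {p : ℕ × (Fin d → ℕ) // validQ d p ∧ 0 < J p}, J p.1 ^ q) * x ^ q) := by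
  classical
  have hx0 : (0 : ℝ) < x := lt_trans one_pos hx
  have hinvpos : (0 : ℝ) < 1 / x := by positivity
  obtain ⟨N, hN⟩ := huv (1 / x) hinvpos
  -- finiteness of the good partition
  have hGsub : goodPart d J x ⊆
      ↑((Finset.Iic N) ×ˢ (Fintype.piFinset fun _ : Fin d => Finset.range (2 ^ N))) := by
    rintro ⟨n, f⟩ ⟨hv, hn, hlt, hge⟩
    have hpv : validQ d (parQ d (n, f)) := validQ_parQ hv
    have hnN : n ≤ N := by
      by_contra hc
      exact absurd hge (not_le.mpr (hN _ hpv (by simp [parQ]; omega)))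
    simp only [Finset.coe_product, Set.mem_prod, Finset.mem_coe, Finset.mem_Iic,
      Fintype.mem_piFinset, Finset.mem_range]
    exact ⟨hnN, fun i => lt_of_lt_of_le (hv i) (Nat.pow_le_pow_right (by norm_num) hnN)⟩
  have hGfin : (goodPart d J x).Finite := Set.Finite.subset (Finset.finite_toSet _) hGsub
  set G : Finset (ℕ × (Fin d → ℕ)) := hGfin.toFinset with hG
  have hmemG : ∀ p, p ∈ G ↔ p ∈ goodPart d J x := by
    intro p; simp [hG, Set.Finite.mem_toFinset]
  have hncard : (goodPart d J x).ncard = G.card := Set.ncard_eq_toFinset_card _ hGfin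
  set P : Finset (ℕ × (Fin d → ℕ)) := G.image (parQ d) with hP
  have hmemP : ∀ a ∈ P, validQ d a ∧ 1 / x ≤ J a := by
    intro a ha
    obtain ⟨p, hp, rfl⟩ := Finset.mem_image.mp ha
    obtain ⟨hv, hn, hlt, hge⟩ := (hmemG p).mp hp
    exact ⟨validQ_parQ hv, hge⟩
  -- fiber bound
  have hfib : ∀ a ∈ P, (G.filter fun p => parQ d p = a).card ≤ 2 ^ d := by
    intro a _
    have hle : (G.filter fun p => parQ d p = a).card ≤
        (Finset.univ : Finset (Fin d → Fin 2)).card := by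
      apply Finset.card_le_card_of_injOn (fun p i => (⟨p.2 i % 2, Nat.mod_lt _ two_pos⟩ : Fin 2))
      · intro _ _; exact Finset.mem_univ _
      · intro p hp p' hp' heq
        simp only [Finset.coe_filter, Set.mem_setOf_eq, hmemG] at hp hp'
        obtain ⟨⟨hv, hn, _, _⟩, hpa⟩ := hp
        obtain ⟨⟨hv', hn', _, _⟩, hpa'⟩ := hp'
        have hpp : parQ d p = parQ d p' := hpa.trans hpa'.symm
        have h1 : p.1 - 1 = p'.1 - 1 := congrArg Prod.fst hpp
        have h2 : ∀ i, p.2 i / 2 = p'.2 i / 2 := fun i =>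
          congrFun (congrArg Prod.snd hpp) i
        have h3 : ∀ i, p.2 i % 2 = p'.2 i % 2 := by
          intro i
          have := congrFun heq i
          simpa [Fin.ext_iff] using this
        have : p.1 = p'.1 := by omega
        refine Prod.ext this (funext fun i => by have := h2 i; have := h3 i; omega)
    simpa using hle
  have hcard1 : G.card ≤ 2 ^ d * P.card := Finset.card_le_mul_card_image _ _ hfib
  -- sum bound over parents
  set C : ℝ := ∑' p : {p : ℕ × (Fin d → ℕ) // validQ d p ∧ 0 < J p}, J p.1 ^ q with hC
  have hsumP : (P.card : ℝ) * (1 / x) ^ q ≤ C := by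
    have hemb : ∀ a : {a // a ∈ P}, validQ d a.1 ∧ 0 < J a.1 := fun a =>
      ⟨(hmemP a.1 a.2).1, lt_of_lt_of_le hinvpos (hmemP a.1 a.2).2⟩
    set e : {a // a ∈ P} ↪ {p : ℕ × (Fin d → ℕ) // validQ d p ∧ 0 < J p} :=
      ⟨fun a => ⟨a.1, hemb a⟩, by
        intro a b h
        apply Subtype.ext
        have := congrArg Subtype.val h
        exact this⟩ with he
    calc (P.card : ℝ) * (1 / x) ^ q
        = ∑ _a ∈ P.attach, (1 / x) ^ q := by
          rw [Finset.sum_const, Finset.card_attach, nsmul_eq_mul]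
      _ ≤ ∑ a ∈ P.attach, J a.1 ^ q := by
          refine Finset.sum_le_sum fun a _ => ?_
          exact Real.rpow_le_rpow hinvpos.le (hmemP a.1 a.2).2 hq0
      _ = ∑ b ∈ P.attach.map e, J b.1 ^ q := by
          rw [Finset.sum_map]
          rfl
      _ ≤ C := by
          refine Summable.sum_le_tsum _ (fun b _ => Real.rpow_nonneg ?_ q) hsum
          exact (b.2.2).le
  have hxq : (0 : ℝ) < x ^ q := Real.rpow_pos_of_pos hx0 q
  have hPcard : (P.card : ℝ) ≤ C * x ^ q := by
    have h1 : (1 / x) ^ q = (x ^ q)⁻¹ := by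
      rw [one_div, Real.inv_rpow hx0.le]
    rw [h1, ← div_eq_mul_inv, div_le_iff₀ hxq] at hsumP
    exact hsumP
  calc ((goodPart d J x).ncard : ℝ) = (G.card : ℝ) := by rw [hncard]
    _ ≤ (2 ^ d : ℕ) * (P.card : ℝ) := by exact_mod_cast hcard1
    _ ≤ 2 ^ d * (C * x ^ q) := by
        push_cast
        exact mul_le_mul_of_nonneg_left hPcard (by positivity)

/-- For a non-trivial, monotone, uniformly vanishing, locally non-vanishing
set function `𝔍` on dyadic cubes with finite critical exponent
`κ = inf {q ≥ 0 : ∑_{Q} 𝔍(Q)^q < ∞}` (the sum over cubes with positive `𝔍`-value), the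
upper partition entropy satisfies `limsup_{x→∞} log card(G_x) / log x ≤ κ`. -/
theorem stmt9 (d : ℕ) (hd : 0 < d) (J : ℕ × (Fin d → ℕ) → ℝ)
    (hJ0 : ∀ p, 0 ≤ J p)
    (hnt : ∃ p, validQ d p ∧ 0 < J p)
    (hmono : ∀ p, validQ d p → 0 < p.1 → J p ≤ J (parQ d p))
    (huv : ∀ ε > (0 : ℝ), ∃ N : ℕ, ∀ p, validQ d p → N ≤ p.1 → J p < ε)
    (hlnv : ∀ p, validQ d p → 0 < J p →
      ∃ j : Fin d → Fin 2, 0 < J (p.1 + 1, fun i => 2 * p.2 i + (j i : ℕ)))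
    (hκ : {q : ℝ | 0 ≤ q ∧
      Summable (fun p : {p : ℕ × (Fin d → ℕ) // validQ d p ∧ 0 < J p} => J p.1 ^ q)}.Nonempty) :
    limsup (fun x : ℝ =>
        ((Real.log ((goodPart d J x).ncard) / Real.log x : ℝ) : EReal)) atTop ≤
      ((sInf {q : ℝ | 0 ≤ q ∧
        Summable (fun p : {p : ℕ × (Fin d → ℕ) // validQ d p ∧ 0 < J p} => J p.1 ^ q)} : ℝ) :
        EReal) := by
  classical
  set S : Set ℝ := {q : ℝ | 0 ≤ q ∧
    Summable (fun p : {p : ℕ × (Fin d → ℕ) // validQ d p ∧ 0 < J p} => J p.1 ^ q)} with hS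
  set L : EReal := limsup (fun x : ℝ =>
      ((Real.log ((goodPart d J x).ncard) / Real.log x : ℝ) : EReal)) atTop with hL
  have hSbdd : BddBelow S := ⟨0, fun q hq => hq.1⟩
  -- for each q in S, L ≤ q
  have key : ∀ q ∈ S, L ≤ (q : EReal) := by
    rintro q ⟨hq0, hsum⟩
    set C : ℝ := ∑' p : {p : ℕ × (Fin d → ℕ) // validQ d p ∧ 0 < J p}, J p.1 ^ q with hC
    have hC0 : 0 ≤ C := tsum_nonneg fun p => Real.rpow_nonneg (hJ0 p.1) q
    set B : ℝ := 2 ^ d * C + 1 with hB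
    have hB1 : (1 : ℝ) ≤ B := by
      rw [hB]
      have : (0 : ℝ) ≤ 2 ^ d * C := mul_nonneg (by positivity) hC0
      linarith
    have hB0 : (0 : ℝ) < B := lt_of_lt_of_le one_pos hB1
    -- eventual pointwise bound
    have hev : ∀ x : ℝ, 2 ≤ x →
        Real.log ((goodPart d J x).ncard) / Real.log x ≤ q + Real.log B / Real.log x := by
      intro x hx2
      have hx1 : (1 : ℝ) < x := lt_of_lt_of_le one_lt_two hx2
      have hx0 : (0 : ℝ) < x := lt_trans one_pos hx1
      have hlogx : 0 < Real.log x := Real.log_pos hx1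
      have hxq : (0 : ℝ) < x ^ q := Real.rpow_pos_of_pos hx0 q
      have hcard := card_goodPart_le d J huv q hq0 hsum x hx1
      have hlog : Real.log ((goodPart d J x).ncard) ≤ Real.log B + q * Real.log x := by
        have hBx : Real.log (B * x ^ q) = Real.log B + q * Real.log x := by
          rw [Real.log_mul (ne_of_gt hB0) (ne_of_gt hxq), Real.log_rpow hx0]
        rcases Nat.eq_zero_or_pos (goodPart d J x).ncard with h0 | h0
        · rw [h0]
          simp only [Nat.cast_zero, Real.log_zero]
          rw [← hBx]
          refine Real.log_nonneg ?_
          nlinarith [Real.one_le_rpow hx1.le hq0]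
        · rw [← hBx]
          refine Real.log_le_log (by exact_mod_cast h0) ?_
          refine le_trans hcard ?_
          rw [hB]
          nlinarith
      calc Real.log ((goodPart d J x).ncard) / Real.log x
          ≤ (Real.log B + q * Real.log x) / Real.log x :=
            (div_le_div_iff_of_pos_right hlogx).mpr hlog
        _ = q + Real.log B / Real.log x := by field_simp; ring
    -- the comparison function tends to q
    have htend : Tendsto (fun x : ℝ => q + Real.log B / Real.log x) atTop (nhds q) := by
      have h1 : Tendsto (fun x : ℝ => Real.log B / Real.log x) atTop (nhds 0) :=
        Tendsto.div_atTop tendsto_const_nhds Real.tendsto_log_atTop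
      simpa using tendsto_const_nhds.add h1
    have htendE : Tendsto (fun x : ℝ => ((q + Real.log B / Real.log x : ℝ) : EReal)) atTop
        (nhds (q : EReal)) := by
      exact (EReal.tendsto_coe).mpr htend
    have hlimsup_g : limsup (fun x : ℝ => ((q + Real.log B / Real.log x : ℝ) : EReal)) atTop
        = (q : EReal) := htendE.limsup_eq
    rw [hL, ← hlimsup_g]
    refine limsup_le_limsup ?_
    filter_upwards [eventually_ge_atTop (2 : ℝ)] with x hx
    exact_mod_cast EReal.coe_le_coe_iff.mpr (hev x hx)
  -- conclude via density
  refine le_of_forall_gt_imp_ge_of_dense fun c hc => ?_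
  rcases EReal.lt_iff_exists_real_btwn.mp hc with ⟨z, hz1, hz2⟩
  have hz : sInf S < z := by exact_mod_cast hz1
  obtain ⟨w, hwS, hwz⟩ := (csInf_lt_iff hSbdd hκ).mp hz
  exact le_trans (key w hwS) (le_trans (by exact_mod_cast hwz.le) hz2.le)

end
end
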